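/- Suppose (1/n) log L_n(b) → −K(b) almost surely for each b, where K(b) ≥ 0, and suppose Π(b : K(b) < η) > 0 for every η > 0. Then almost surely, for every α > 0, liminf_{n→∞} e^{nα} ∫ L_n(b) Π(db) ≥ Π(b : K(b) < α) > 0; in particular e^{nα} ∫ L_n dΠ does not converge to 0. -/

import Mathlib

open MeasureTheory Filter

/-- If `(1/n) log L_n(b) → -K(b)` a.s. for each `b`, with `K ≥ 0`, and the prior puts
positive mass on `{K < η}` for every `η > 0`, then almost surely, for every `α > 0`,
`liminf e^{nα} ∫ L_n dΠ ≥ Π(K < α) > 0`; in particular `e^{nα} ∫ L_n dΠ` does not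
converge to `0`. -/
theorem liminf_exp_integral_likelihood
    {Ω 𝓑 : Type*} [MeasurableSpace Ω] [MeasurableSpace 𝓑]
    (P : Measure Ω) [IsProbabilityMeasure P]
    (Pri : Measure 𝓑) [IsProbabilityMeasure Pri]
    (K : 𝓑 → ℝ) (hKmeas : Measurable K) (hK0 : ∀ b, 0 ≤ K b)
    (L : ℕ → 𝓑 → Ω → ℝ)
    (hLmeas : ∀ n, Measurable (Function.uncurry (L n)))
    (hLpos : ∀ n b ω, 0 < L n b ω)
    (hLLN : ∀ b, ∀ᵐ ω ∂P,
      Tendsto (fun n : ℕ => Real.log (L n b ω) / n) atTop (nhds (-(K b))))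
    (hprior : ∀ η : ℝ, 0 < η → 0 < Pri {b | K b < η}) :
    ∀ᵐ ω ∂P, ∀ α : ℝ, 0 < α →
      (Pri {b | K b < α}
          ≤ atTop.liminf (fun n : ℕ =>
              ENNReal.ofReal (Real.exp (n * α)) * ∫⁻ b, ENNReal.ofReal (L n b ω) ∂Pri)
        ∧ 0 < Pri {b | K b < α}
        ∧ ¬ Tendsto (fun n : ℕ =>
              ENNReal.ofReal (Real.exp (n * α)) * ∫⁻ b, ENNReal.ofReal (L n b ω) ∂Pri)
            atTop (nhds 0)) := by
  -- measurability of the convergence set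
  have hmeas : MeasurableSet {x : 𝓑 × Ω |
      Tendsto (fun n : ℕ => Real.log (L n x.1 x.2) / n) atTop (nhds (-(K x.1)))} := by
    apply measurableSet_tendsto_fun
    · intro n
      exact ((hLmeas n).log).div_const _
    · exact (hKmeas.comp measurable_fst).neg
  -- swap the a.e. quantifiers
  have hswap : ∀ᵐ ω ∂P, ∀ᵐ b ∂Pri,
      Tendsto (fun n : ℕ => Real.log (L n b ω) / n) atTop (nhds (-(K b))) := by
    rw [← Measure.ae_ae_comm hmeas]
    exact Eventually.of_forall hLLN
  filter_upwards [hswap] with ω hω α hα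
  -- measurability of b ↦ L n b ω
  have hLb : ∀ n : ℕ, Measurable fun b => L n b ω := by
    intro n
    exact (hLmeas n).comp (measurable_id.prodMk measurable_const)
  -- pointwise divergence on {K < α}
  have hdiv : ∀ᵐ b ∂Pri, b ∈ {b | K b < α} →
      Tendsto (fun n : ℕ => ENNReal.ofReal (Real.exp (n * α)) * ENNReal.ofReal (L n b ω))
        atTop (nhds ⊤) := by
    filter_upwards [hω] with b hb hbα
    have hpos : 0 < α - K b := by simpa using sub_pos.mpr hbα
    have h1 : Tendsto (fun n : ℕ => α + Real.log (L n b ω) / n) atTop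
        (nhds (α - K b)) := by
      have := (tendsto_const_nhds (x := α) (f := atTop (α := ℕ))).add hb
      simpa [sub_eq_add_neg] using this
    have h2 : Tendsto (fun n : ℕ => (n : ℝ) * (α + Real.log (L n b ω) / n)) atTop atTop :=
      Filter.Tendsto.atTop_mul_pos hpos tendsto_natCast_atTop_atTop h1
    have h3 : Tendsto (fun n : ℕ => n * α + Real.log (L n b ω)) atTop atTop := by
      apply h2.congr'
      filter_upwards [eventually_gt_atTop 0] with n hn
      have hn' : (n : ℝ) ≠ 0 := Nat.cast_ne_zero.mpr hn.ne'
      field_simp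
    have h4 : Tendsto (fun n : ℕ => Real.exp (n * α) * L n b ω) atTop atTop := by
      have heq : (fun n : ℕ => Real.exp (n * α) * L n b ω)
          = fun n : ℕ => Real.exp (n * α + Real.log (L n b ω)) :=
        funext fun n => by rw [Real.exp_add, Real.exp_log (hLpos n b ω)]
      rw [heq]
      exact Real.tendsto_exp_atTop.comp h3
    have h5 : Tendsto (fun n : ℕ => ENNReal.ofReal (Real.exp (n * α) * L n b ω))
        atTop (nhds ⊤) := ENNReal.tendsto_ofReal_atTop.comp h4
    apply h5.congr
    intro n
    rw [ENNReal.ofReal_mul (Real.exp_nonneg _)]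
  -- Fatou's lemma step
  have hKα : MeasurableSet {b | K b < α} := hKmeas measurableSet_Iio
  have key : Pri {b | K b < α}
      ≤ atTop.liminf (fun n : ℕ =>
          ENNReal.ofReal (Real.exp (n * α)) * ∫⁻ b, ENNReal.ofReal (L n b ω) ∂Pri) := by
    have step1 : Pri {b | K b < α}
        ≤ ∫⁻ b, atTop.liminf (fun n : ℕ =>
            ENNReal.ofReal (Real.exp (n * α)) * ENNReal.ofReal (L n b ω)) ∂Pri := by
      have : Pri {b | K b < α}
          = ∫⁻ b, Set.indicator {b | K b < α} (fun _ => (1 : ENNReal)) b ∂Pri := by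
        rw [lintegral_indicator hKα]
        simp
      rw [this]
      apply lintegral_mono_ae
      filter_upwards [hdiv] with b hb
      by_cases hbα : b ∈ {b | K b < α}
      · rw [Set.indicator_of_mem hbα]
        rw [(hb hbα).liminf_eq]
        exact le_top
      · rw [Set.indicator_of_notMem hbα]
        exact zero_le
    have step2 : ∫⁻ b, atTop.liminf (fun n : ℕ =>
          ENNReal.ofReal (Real.exp (n * α)) * ENNReal.ofReal (L n b ω)) ∂Pri
        ≤ atTop.liminf (fun n : ℕ => ∫⁻ b,
            ENNReal.ofReal (Real.exp (n * α)) * ENNReal.ofReal (L n b ω) ∂Pri) :=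
      lintegral_liminf_le fun n =>
        ((measurable_const).mul (ENNReal.measurable_ofReal.comp (hLb n)))
    have step3 : ∀ n : ℕ, ∫⁻ b,
        ENNReal.ofReal (Real.exp (n * α)) * ENNReal.ofReal (L n b ω) ∂Pri
        = ENNReal.ofReal (Real.exp (n * α)) * ∫⁻ b, ENNReal.ofReal (L n b ω) ∂Pri := by
      intro n
      exact lintegral_const_mul _ (ENNReal.measurable_ofReal.comp (hLb n))
    calc Pri {b | K b < α} ≤ _ := step1
      _ ≤ _ := step2
      _ = _ := by simp_rw [step3]
  refine ⟨key, hprior α hα, fun htend => ?_⟩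
  have := htend.liminf_eq
  rw [this] at key
  exact absurd key (by simpa using (hprior α hα).ne')
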